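/- Let n ≥ 3, α ∈ (2/n, 1], R > 0, T > 0, and c a constant with c − 1 > (2/α)·1/(n − 2/α). Let Ψ(x,t) = C_α ((T − ct)/(|x|² + R²))^{1/α} with C_α^α = 2 n^{α−1}(n − 2/α), and define A_i, B_i as in the second order expansion: A_i = −(n/Ψ)^α ∂_{x_i}Ψ, A_{i+n} = −A_i, B_i = B_{i+n} = (n/Ψ)^α ∂_{x_i}((n/Ψ)^α ∂_{x_i}Ψ) − (α/(2Ψ))((n/Ψ)^α ∂_{x_i}Ψ)² for 1 ≤ i ≤ n. Then there exists a constant c₆ > 0 depending only on c, n, α such that for every ε > 0 and every i = 1,…,2n, the function u_i^ε = (1/(2n))(Ψ + ε A_i + ε² B_i) satisfies (1/(4n)) Ψ ≤ u_i^ε ≤ (3/(4n)) Ψ at every point (x,t) with ε (|x|²+R²)^{1/2} < c₆ (T − ct) and 0 ≤ t < T/c. -/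

import Mathlib

set_option maxHeartbeats 1000000

noncomputable def pd {n : ℕ} (i : Fin n) (f : EuclideanSpace ℝ (Fin n) → ℝ)
    (x : EuclideanSpace ℝ (Fin n)) : ℝ :=
  fderiv ℝ f x (EuclideanSpace.single i (1 : ℝ))

open Real

lemma base_pos {n : ℕ} (x : EuclideanSpace ℝ (Fin n)) {R : ℝ} (hR : 0 < R) :
    0 < ‖x‖ ^ 2 + R ^ 2 := by positivity

lemma hasFDerivAt_base {n : ℕ} (R : ℝ) (x : EuclideanSpace ℝ (Fin n)) :
    HasFDerivAt (fun z : EuclideanSpace ℝ (Fin n) => ‖z‖ ^ 2 + R ^ 2)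
      ((2 : ℝ) • (innerSL ℝ x)) x := by
  have h := (hasFDerivAt_id x).norm_sq.add_const (R ^ 2)
  refine h.congr_fderiv ?_
  ext y; simp

lemma hasFDerivAt_Krpow {n : ℕ} (K p : ℝ) {R : ℝ} (hR : 0 < R)
    (x : EuclideanSpace ℝ (Fin n)) :
    HasFDerivAt (fun z : EuclideanSpace ℝ (Fin n) => K * (‖z‖ ^ 2 + R ^ 2) ^ p)
      ((K * (p * (‖x‖ ^ 2 + R ^ 2) ^ (p - 1) * 2)) • (innerSL ℝ x)) x := by
  have h := ((hasFDerivAt_base R x).rpow_const (p := p)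
    (Or.inl (ne_of_gt (base_pos x hR)))).const_mul K
  refine h.congr_fderiv ?_
  ext y
  simp [smul_smul]

lemma pd_Krpow {n : ℕ} (i : Fin n) (K p : ℝ) {R : ℝ} (hR : 0 < R)
    (x : EuclideanSpace ℝ (Fin n)) :
    pd i (fun z : EuclideanSpace ℝ (Fin n) => K * (‖z‖ ^ 2 + R ^ 2) ^ p) x
      = K * (p * (‖x‖ ^ 2 + R ^ 2) ^ (p - 1) * 2) * x i := by
  rw [pd, (hasFDerivAt_Krpow K p hR x).fderiv]
  simp [real_inner_comm, EuclideanSpace.inner_single_right]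

lemma pd_proj_Krpow {n : ℕ} (i : Fin n) (C p : ℝ) {R : ℝ} (hR : 0 < R)
    (x : EuclideanSpace ℝ (Fin n)) :
    pd i (fun y : EuclideanSpace ℝ (Fin n) => C * y i * (‖y‖ ^ 2 + R ^ 2) ^ p) x
      = C * ((‖x‖ ^ 2 + R ^ 2) ^ p
          + x i * (p * (‖x‖ ^ 2 + R ^ 2) ^ (p - 1) * 2 * x i)) := by
  have h1 : HasFDerivAt (fun y : EuclideanSpace ℝ (Fin n) => C * y i)
      (C • (EuclideanSpace.proj i : EuclideanSpace ℝ (Fin n) →L[ℝ] ℝ)) x := by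
    exact HasFDerivAt.const_mul (a := fun y : EuclideanSpace ℝ (Fin n) => y i)
      ((EuclideanSpace.proj (𝕜 := ℝ) i).hasFDerivAt) C
  have h2 := (hasFDerivAt_base R x).rpow_const (p := p)
    (Or.inl (ne_of_gt (base_pos x hR)))
  have h : HasFDerivAt (fun y : EuclideanSpace ℝ (Fin n) => C * y i * (‖y‖ ^ 2 + R ^ 2) ^ p) _ x := h1.mul h2
  rw [pd, h.fderiv]
  simp [real_inner_comm, EuclideanSpace.inner_single_right, smul_smul]
  ring

theorem expansion_comparable_to_barrier (n : ℕ) (hn : 3 ≤ n) (α c : ℝ)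
    (hα : 2 / (n : ℝ) < α ∧ α ≤ 1)
    (hc : c - 1 > (2 / α) * (1 / ((n : ℝ) - 2 / α))) :
    ∃ c₆ > (0 : ℝ), ∀ (R T Cα : ℝ), 0 < R → 0 < T → 0 < Cα →
      Cα ^ α = 2 * (n : ℝ) ^ (α - 1) * ((n : ℝ) - 2 / α) →
      ∀ Ψ : EuclideanSpace ℝ (Fin n) → ℝ → ℝ,
      (∀ x s, Ψ x s = Cα * ((T - c * s) / (‖x‖ ^ 2 + R ^ 2)) ^ (1 / α)) →
      ∀ A B : (Fin n ⊕ Fin n) → EuclideanSpace ℝ (Fin n) → ℝ → ℝ,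
      (∀ (i : Fin n) x s,
        A (Sum.inl i) x s = -(((n : ℝ) / Ψ x s) ^ α) * pd i (fun z => Ψ z s) x) →
      (∀ (i : Fin n) x s, A (Sum.inr i) x s = -A (Sum.inl i) x s) →
      (∀ (i : Fin n) x s,
        B (Sum.inl i) x s = ((n : ℝ) / Ψ x s) ^ α *
            pd i (fun y => ((n : ℝ) / Ψ y s) ^ α * pd i (fun z => Ψ z s) y) x -
          (α / (2 * Ψ x s)) *
            (((n : ℝ) / Ψ x s) ^ α * pd i (fun z => Ψ z s) x) ^ 2) →
      (∀ (i : Fin n) x s, B (Sum.inr i) x s = B (Sum.inl i) x s) →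
      ∀ ε : ℝ, 0 < ε →
      ∀ u : (Fin n ⊕ Fin n) → EuclideanSpace ℝ (Fin n) → ℝ → ℝ,
      (∀ i x s, u i x s = (1 / (2 * (n : ℝ))) *
        (Ψ x s + ε * A i x s + ε ^ 2 * B i x s)) →
      ∀ (x : EuclideanSpace ℝ (Fin n)) (t : ℝ), 0 ≤ t → t < T / c →
        ε * (‖x‖ ^ 2 + R ^ 2) ^ ((1 : ℝ) / 2) < c₆ * (T - c * t) →
        ∀ i, (1 / (4 * (n : ℝ))) * Ψ x t ≤ u i x t ∧
          u i x t ≤ (3 / (4 * (n : ℝ))) * Ψ x t := by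
  -- basic positivity facts about the parameters
  have hn0 : (0 : ℝ) < (n : ℝ) := by
    have : (3 : ℝ) ≤ (n : ℝ) := by exact_mod_cast hn
    linarith
  have hα0 : 0 < α := lt_trans (by positivity) hα.1
  have hαn : 2 / α < (n : ℝ) := by
    rw [div_lt_iff₀ hα0]
    have h2 : 2 < α * (n : ℝ) := by
      have := (div_lt_iff₀ hn0).mp hα.1
      linarith [this]
    linarith [h2]
  have hc1 : 1 < c := by
    have h1 : 0 < (2 / α) * (1 / ((n : ℝ) - 2 / α)) := by
      apply mul_pos (by positivity)
      rw [one_div]; exact inv_pos.mpr (by linarith)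
    linarith
  have hc0 : 0 < c := by linarith
  -- the constants
  set D : ℝ := 2 * (n : ℝ) ^ (α - 1) * ((n : ℝ) - 2 / α) with hDdef
  have hD : 0 < D := by
    apply mul_pos (by positivity)
    linarith
  set NA : ℝ := (n : ℝ) ^ α with hNAdef
  have hNA : 0 < NA := Real.rpow_pos_of_pos hn0 α
  set K1 : ℝ := 2 * NA / (α * D) with hK1def
  have hK1 : 0 < K1 := by positivity
  set β : ℝ := 2 / α with hβdef
  have hβ : 0 < β := by positivity
  set c₇ : ℝ := NA * K1 / D with hc₇def
  have hc₇ : 0 < c₇ := by positivity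
  set K2 : ℝ := c₇ * (1 + β) + α / 2 * K1 ^ 2 with hK2def
  have hK2 : 0 < K2 := by positivity
  refine ⟨min 1 (1 / (2 * (K1 + K2))), lt_min one_pos (by positivity), ?_⟩
  set c₆ : ℝ := min 1 (1 / (2 * (K1 + K2))) with hc₆def
  have hc₆0 : 0 < c₆ := lt_min one_pos (by positivity)
  have hc₆1 : c₆ ≤ 1 := min_le_left _ _
  have hc₆sq : c₆ ^ 2 ≤ c₆ := by nlinarith
  have hc₆half : (K1 + K2) * c₆ ≤ 1 / 2 := by
    have h := min_le_right (1:ℝ) (1 / (2 * (K1 + K2)))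
    have hK12 : 0 < K1 + K2 := by linarith
    calc (K1 + K2) * c₆ ≤ (K1 + K2) * (1 / (2 * (K1 + K2))) :=
          mul_le_mul_of_nonneg_left h hK12.le
      _ = 1 / 2 := by field_simp
  clear_value D NA K1 β c₇ K2 c₆
  intro R T Cα hR hT hCα0 hCα Ψ hΨ A B hAdef hAneg hBdef hBeq ε hε u hu x t ht htT hregion
  -- setup at the point (x, t)
  set τ : ℝ := T - c * t with hτdef
  have hτ : 0 < τ := by
    have := (lt_div_iff₀ hc0).mp htT
    simp only [hτdef]; linarith
  clear_value τ
  have hFx : 0 < ‖x‖ ^ 2 + R ^ 2 := base_pos x hR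
  set p : ℝ := -(1 / α) with hpdef
  set K : ℝ := Cα * τ ^ (1 / α) with hKdef
  have hK : 0 < K := mul_pos hCα0 (Real.rpow_pos_of_pos hτ _)
  clear_value p K
  -- Ψ as a clean rpow function of the space variable
  have hΨfun : (fun z : EuclideanSpace ℝ (Fin n) => Ψ z t)
      = fun z : EuclideanSpace ℝ (Fin n) => K * (‖z‖ ^ 2 + R ^ 2) ^ p := by
    funext z
    have hfz : 0 < ‖z‖ ^ 2 + R ^ 2 := base_pos z hR
    rw [hΨ z t, ← hτdef, Real.div_rpow hτ.le hfz.le, hpdef,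
      Real.rpow_neg hfz.le, hKdef, div_eq_mul_inv]
    ring
  have hψval : Ψ x t = K * (‖x‖ ^ 2 + R ^ 2) ^ p := congrFun hΨfun x
  have hXp : 0 < (‖x‖ ^ 2 + R ^ 2) ^ p := Real.rpow_pos_of_pos hFx p
  have hψpos : 0 < Ψ x t := by rw [hψval]; exact mul_pos hK hXp
  -- the weight (n/Ψ)^α
  have hμ : ∀ y : EuclideanSpace ℝ (Fin n),
      ((n : ℝ) / Ψ y t) ^ α = NA * (‖y‖ ^ 2 + R ^ 2) / (D * τ) := by
    intro y
    have hfy : 0 < ‖y‖ ^ 2 + R ^ 2 := base_pos y hR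
    have hq : 0 < τ / (‖y‖ ^ 2 + R ^ 2) := div_pos hτ hfy
    have hΨy : Ψ y t = Cα * (τ / (‖y‖ ^ 2 + R ^ 2)) ^ (1 / α) := by
      rw [hΨ y t, ← hτdef]
    have hΨypos : 0 < Ψ y t := by
      rw [hΨy]; exact mul_pos hCα0 (Real.rpow_pos_of_pos hq _)
    have hΨα : (Ψ y t) ^ α = D * (τ / (‖y‖ ^ 2 + R ^ 2)) := by
      rw [hΨy, Real.mul_rpow hCα0.le (Real.rpow_nonneg hq.le _),
        ← Real.rpow_mul hq.le, one_div_mul_cancel (ne_of_gt hα0),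
        Real.rpow_one, hCα, hDdef]
    rw [Real.div_rpow (Nat.cast_nonneg n) hΨypos.le, hΨα, hNAdef]
    field_simp [hD.ne', hτ.ne', hfy.ne']
  -- first partial derivative of Ψ
  have hpdΨ : ∀ (j : Fin n) (y : EuclideanSpace ℝ (Fin n)),
      pd j (fun z => Ψ z t) y
        = K * (p * (‖y‖ ^ 2 + R ^ 2) ^ (p - 1) * 2) * y j := by
    intro j y
    rw [hΨfun, pd_Krpow j K p hR y]
  have hsub : ∀ y : EuclideanSpace ℝ (Fin n),
      (‖y‖ ^ 2 + R ^ 2) ^ (p - 1) = (‖y‖ ^ 2 + R ^ 2) ^ p / (‖y‖ ^ 2 + R ^ 2) :=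
    fun y => Real.rpow_sub_one (ne_of_gt (base_pos y hR)) p
  -- exact formula for A
  have hA : ∀ j : Fin n, A (Sum.inl j) x t = K1 / τ * x j * Ψ x t := by
    intro j
    rw [hAdef j x t, hμ x, hpdΨ j x, hψval, hsub x, hK1def, hpdef]
    field_simp [hτ.ne', hα0.ne', hD.ne', hFx.ne']
  -- the function inside the second pd, rewritten explicitly
  have hgfun : ∀ j : Fin n,
      (fun y : EuclideanSpace ℝ (Fin n) =>
          ((n : ℝ) / Ψ y t) ^ α * pd j (fun z => Ψ z t) y)
        = fun y : EuclideanSpace ℝ (Fin n) =>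
            (2 * NA * K * p / (D * τ)) * y j * (‖y‖ ^ 2 + R ^ 2) ^ p := by
    intro j
    funext y
    have hfy : 0 < ‖y‖ ^ 2 + R ^ 2 := base_pos y hR
    rw [hμ y, hpdΨ j y, hsub y]
    field_simp [hτ.ne', hD.ne', hfy.ne']
  have hpdg : ∀ j : Fin n,
      pd j (fun y : EuclideanSpace ℝ (Fin n) =>
          ((n : ℝ) / Ψ y t) ^ α * pd j (fun z => Ψ z t) y) x
        = (2 * NA * K * p / (D * τ))
            * ((‖x‖ ^ 2 + R ^ 2) ^ p
              + x j * (p * (‖x‖ ^ 2 + R ^ 2) ^ (p - 1) * 2 * x j)) := by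
    intro j
    rw [hgfun j, pd_proj_Krpow j _ p hR x]
  -- exact formula for B
  have hB : ∀ j : Fin n, B (Sum.inl j) x t
      = -(c₇ / τ ^ 2) * Ψ x t * ((‖x‖ ^ 2 + R ^ 2) - β * (x j) ^ 2)
        - α / 2 * (K1 ^ 2 / τ ^ 2) * (x j) ^ 2 * Ψ x t := by
    intro j
    rw [hBdef j x t, hμ x, hpdg j, hpdΨ j x, hψval, hsub x,
      hc₇def, hβdef, hK1def, hpdef]
    field_simp [hτ.ne', hα0.ne', hD.ne', hFx.ne', hK.ne', hXp.ne']
    ring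
  -- coordinate bounds
  have hs2 : 0 ≤ (‖x‖ ^ 2 + R ^ 2) ^ ((1 : ℝ) / 2) := Real.rpow_nonneg hFx.le _
  have hs2sq : ((‖x‖ ^ 2 + R ^ 2) ^ ((1 : ℝ) / 2)) ^ 2 = ‖x‖ ^ 2 + R ^ 2 := by
    rw [← Real.rpow_natCast ((‖x‖ ^ 2 + R ^ 2) ^ ((1:ℝ)/2)) 2,
      ← Real.rpow_mul hFx.le]
    norm_num
  have hxsq : ∀ j : Fin n, (x j) ^ 2 ≤ ‖x‖ ^ 2 + R ^ 2 := by
    intro j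
    have h1 : (x j) ^ 2 ≤ ‖x‖ ^ 2 := by
      rw [EuclideanSpace.norm_eq,
        Real.sq_sqrt (Finset.sum_nonneg fun k _ => sq_nonneg _)]
      simpa [sq_abs] using Finset.single_le_sum
        (f := fun k => ‖x k‖ ^ 2) (fun k _ => sq_nonneg _) (Finset.mem_univ j)
    nlinarith only [h1, sq_nonneg R]
  have hxabs : ∀ j : Fin n, |x j| ≤ (‖x‖ ^ 2 + R ^ 2) ^ ((1 : ℝ) / 2) := by
    intro j
    have h1 := hxsq j
    nlinarith only [h1, abs_nonneg (x j), sq_abs (x j), hs2, hs2sq]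
  have hE0 : 0 ≤ ε * (‖x‖ ^ 2 + R ^ 2) ^ ((1 : ℝ) / 2) := mul_nonneg hε.le hs2
  -- bound on the A-term
  have hAbound : ∀ j : Fin n, |ε * A (Sum.inl j) x t| ≤ K1 * c₆ * Ψ x t := by
    intro j
    have heq : ε * A (Sum.inl j) x t = K1 * Ψ x t / τ * (ε * x j) := by
      rw [hA j]; ring
    have hcoef : 0 < K1 * Ψ x t / τ := div_pos (mul_pos hK1 hψpos) hτ
    rw [heq, abs_mul, abs_of_pos hcoef, abs_mul, abs_of_pos hε]
    calc K1 * Ψ x t / τ * (ε * |x j|) ≤ K1 * Ψ x t / τ * (c₆ * τ) := by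
          apply mul_le_mul_of_nonneg_left _ hcoef.le
          calc ε * |x j| ≤ ε * (‖x‖ ^ 2 + R ^ 2) ^ ((1 : ℝ) / 2) :=
                mul_le_mul_of_nonneg_left (hxabs j) hε.le
            _ ≤ c₆ * τ := hregion.le
      _ = K1 * c₆ * Ψ x t := by field_simp [hτ.ne']
  -- bound on the B-term
  have hQc : ε ^ 2 * (‖x‖ ^ 2 + R ^ 2) ≤ c₆ ^ 2 * τ ^ 2 := by
    have hsq := mul_le_mul hregion.le hregion.le hE0
      (le_of_lt (lt_of_le_of_lt hE0 hregion))
    have hEf : ε ^ 2 * (((‖x‖ ^ 2 + R ^ 2) ^ ((1:ℝ)/2)) ^ 2)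
        = ε ^ 2 * (‖x‖ ^ 2 + R ^ 2) := by rw [hs2sq]
    nlinarith only [hsq, hEf]
  have hBbound : ∀ j : Fin n, |ε ^ 2 * B (Sum.inl j) x t| ≤ K2 * c₆ * Ψ x t := by
    intro j
    have hz0 : 0 ≤ ε ^ 2 * (x j) ^ 2 := by positivity
    have hQ0 : 0 ≤ ε ^ 2 * (‖x‖ ^ 2 + R ^ 2) := by positivity
    have hzQ : ε ^ 2 * (x j) ^ 2 ≤ ε ^ 2 * (‖x‖ ^ 2 + R ^ 2) :=
      mul_le_mul_of_nonneg_left (hxsq j) (by positivity)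
    have hτ2 : 0 < τ ^ 2 := pow_pos hτ 2
    have heq : ε ^ 2 * B (Sum.inl j) x t
        = (-(c₇ * Ψ x t * ((ε ^ 2 * (‖x‖ ^ 2 + R ^ 2)) - β * (ε ^ 2 * (x j) ^ 2)))
            - α / 2 * K1 ^ 2 * ((ε ^ 2 * (x j) ^ 2) * Ψ x t)) / τ ^ 2 := by
      rw [hB j]; field_simp [hτ.ne']
    have h5 : c₇ * β ≤ K2 := by
      rw [hK2def]; nlinarith only [hc₇, mul_pos hα0 (pow_pos hK1 2)]
    have h5' : c₇ + α / 2 * K1 ^ 2 ≤ K2 := by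
      rw [hK2def]; nlinarith only [mul_pos hc₇ hβ]
    have h7 : c₇ * β * c₆ ^ 2 ≤ K2 * c₆ := by
      have t1 := mul_le_mul_of_nonneg_right h5 (sq_nonneg c₆)
      have t2 := mul_le_mul_of_nonneg_left hc₆sq hK2.le
      linarith only [t1, t2]
    have h8 : (c₇ + α / 2 * K1 ^ 2) * c₆ ^ 2 ≤ K2 * c₆ := by
      have t1 := mul_le_mul_of_nonneg_right h5' (sq_nonneg c₆)
      have t2 := mul_le_mul_of_nonneg_left hc₆sq hK2.le
      linarith only [t1, t2]
    rw [abs_le]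
    have ha0 : (0:ℝ) ≤ c₇ * β * Ψ x t :=
      mul_nonneg (mul_nonneg hc₇.le hβ.le) hψpos.le
    have hb0 : (0:ℝ) ≤ α / 2 * K1 ^ 2 * Ψ x t :=
      mul_nonneg (mul_nonneg (by linarith : (0:ℝ) ≤ α / 2) (sq_nonneg K1))
        hψpos.le
    have t1 := mul_le_mul_of_nonneg_left hzQ ha0
    have t2 := mul_le_mul_of_nonneg_left hQc ha0
    have t5 := mul_le_mul_of_nonneg_right h7 (mul_nonneg hψpos.le hτ2.le)
    have t3 : (0:ℝ) ≤ c₇ * Ψ x t * (ε ^ 2 * (‖x‖ ^ 2 + R ^ 2)) :=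
      mul_nonneg (mul_nonneg hc₇.le hψpos.le) hQ0
    have t4 : (0:ℝ) ≤ α / 2 * K1 ^ 2 * Ψ x t * (ε ^ 2 * (x j) ^ 2) :=
      mul_nonneg hb0 hz0
    have s2 := mul_le_mul_of_nonneg_left hQc
      (mul_nonneg hc₇.le hψpos.le)
    have s3 := mul_le_mul_of_nonneg_left (hzQ.trans hQc) hb0
    have s5 := mul_le_mul_of_nonneg_right h8 (mul_nonneg hψpos.le hτ2.le)
    have s1 : (0:ℝ) ≤ c₇ * β * Ψ x t * (ε ^ 2 * (x j) ^ 2) :=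
      mul_nonneg ha0 hz0
    constructor
    · rw [heq, le_div_iff₀ hτ2]
      linarith only [s1, s2, s3, s5]
    · rw [heq, div_le_iff₀ hτ2]
      linarith only [t1, t2, t3, t4, t5]
  -- combine
  have hW : ∀ i, |ε * A i x t + ε ^ 2 * B i x t| ≤ Ψ x t / 2 := by
    intro i
    have hhalf : K1 * c₆ * Ψ x t + K2 * c₆ * Ψ x t ≤ Ψ x t / 2 := by
      have := mul_le_mul_of_nonneg_right hc₆half hψpos.le
      linarith only [this]
    cases i with
    | inl j =>
      calc |ε * A (Sum.inl j) x t + ε ^ 2 * B (Sum.inl j) x t|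
          ≤ |ε * A (Sum.inl j) x t| + |ε ^ 2 * B (Sum.inl j) x t| := abs_add_le _ _
        _ ≤ K1 * c₆ * Ψ x t + K2 * c₆ * Ψ x t := add_le_add (hAbound j) (hBbound j)
        _ ≤ Ψ x t / 2 := hhalf
    | inr j =>
      rw [hAneg j x t, hBeq j x t]
      have heq : ε * -A (Sum.inl j) x t + ε ^ 2 * B (Sum.inl j) x t
          = -(ε * A (Sum.inl j) x t) + ε ^ 2 * B (Sum.inl j) x t := by ring
      rw [heq]
      calc |(-(ε * A (Sum.inl j) x t)) + ε ^ 2 * B (Sum.inl j) x t|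
          ≤ |(-(ε * A (Sum.inl j) x t))| + |ε ^ 2 * B (Sum.inl j) x t| := abs_add_le _ _
        _ = |ε * A (Sum.inl j) x t| + |ε ^ 2 * B (Sum.inl j) x t| := by
            rw [abs_neg]
        _ ≤ K1 * c₆ * Ψ x t + K2 * c₆ * Ψ x t := add_le_add (hAbound j) (hBbound j)
        _ ≤ Ψ x t / 2 := hhalf
  intro i
  have h := abs_le.mp (hW i)
  rw [hu i x t]
  have h2n : (0:ℝ) < 1 / (2 * (n : ℝ)) := by positivity
  constructor
  · have hle : Ψ x t / 2 ≤ Ψ x t + (ε * A i x t + ε ^ 2 * B i x t) := by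
      linarith only [h.1]
    have hm := mul_le_mul_of_nonneg_left hle h2n.le
    calc 1 / (4 * (n:ℝ)) * Ψ x t = 1 / (2 * (n:ℝ)) * (Ψ x t / 2) := by
          ring
      _ ≤ 1 / (2 * (n:ℝ)) * (Ψ x t + (ε * A i x t + ε ^ 2 * B i x t)) := hm
      _ = 1 / (2 * (n:ℝ)) * (Ψ x t + ε * A i x t + ε ^ 2 * B i x t) := by ring
  · have hle : Ψ x t + (ε * A i x t + ε ^ 2 * B i x t) ≤ 3 / 2 * Ψ x t := by
      linarith only [h.2]
    have hm := mul_le_mul_of_nonneg_left hle h2n.le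
    calc 1 / (2 * (n:ℝ)) * (Ψ x t + ε * A i x t + ε ^ 2 * B i x t)
        = 1 / (2 * (n:ℝ)) * (Ψ x t + (ε * A i x t + ε ^ 2 * B i x t)) := by ring
      _ ≤ 1 / (2 * (n:ℝ)) * (3 / 2 * Ψ x t) := hm
      _ = 3 / (4 * (n:ℝ)) * Ψ x t := by ring
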